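/- A cylinder I_n(ε_1,…,ε_n) is full (i.e., has length exactly β^{-n}) if and only if for every m ≥ 1 and every admissible word (ε'_1,…,ε'_m) ∈ Σ_β^m, the concatenation (ε_1,…,ε_n,ε'_1,…,ε'_m) is admissible. -/

import Mathlib

open MeasureTheory Filter Real Set

noncomputable section

/-- The β-transformation `x ↦ βx mod 1`. -/
def bT (β x : ℝ) : ℝ := Int.fract (β * x)

/-- The digit `ε_{j+1}(x, β) = ⌊β T_β^j x⌋` (0-indexed). -/
def dig (β x : ℝ) (j : ℕ) : ℤ := ⌊β * (bT β)^[j] x⌋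

/-- A finite word is admissible if it is the initial digit string of some `x ∈ [0,1)`. -/
def Adm (β : ℝ) (w : List ℤ) : Prop :=
  ∃ x ∈ Set.Ico (0:ℝ) 1, ∀ i : Fin w.length, dig β x i = w.get i

/-- The set `Σ_β^n` of admissible words of length `n`. -/
def SigmaB (β : ℝ) (n : ℕ) : Set (List ℤ) := {w | w.length = n ∧ Adm β w}

/-- The cylinder of a word. -/
def cyl (β : ℝ) (w : List ℤ) : Set ℝ :=
  {x | x ∈ Set.Ico (0:ℝ) 1 ∧ ∀ i : Fin w.length, dig β x i = w.get i}

/-- The length of a cylinder. -/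
def cylLen (β : ℝ) (w : List ℤ) : ℝ := (volume (cyl β w)).toReal

/-- A word/cylinder is full if the cylinder has maximal length `β^{-n}`. -/
def IsFull (β : ℝ) (w : List ℤ) : Prop := cylLen β w = (β ^ w.length)⁻¹

/-- The left endpoint `Σ_j ε_j β^{-j}` of the cylinder of a word. -/
def leftpt (β : ℝ) (w : List ℤ) : ℝ :=
  ∑ i : Fin w.length, (w.get i : ℝ) / β ^ ((i : ℕ) + 1)

/-- Birkhoff (ergodic) sum `S_n f(x)`. -/
def birk (β : ℝ) (f : ℝ → ℝ) (n : ℕ) (x : ℝ) : ℝ :=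
  ∑ j ∈ Finset.range n, f ((bT β)^[j] x)

/-- The digit sequence of `1`. -/
def eps1 (β : ℝ) (j : ℕ) : ℤ := ⌊β * (bT β)^[j] 1⌋

/-- The infinite β-expansion of `1`. -/
def epsStar (β : ℝ) : ℕ → ℤ := by
  classical
  exact
  if h : ∃ m, eps1 β m ≠ 0 ∧ ∀ k, m < k → eps1 β k = 0 then
    fun j =>
      if j % (h.choose + 1) = h.choose then eps1 β h.choose - 1
      else eps1 β (j % (h.choose + 1))
  else eps1 β

/-- Strict lexicographic order on integer sequences. -/
def lexLt (a b : ℕ → ℤ) : Prop := ∃ k, (∀ j, j < k → a j = b j) ∧ a k < b k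

/-- The partition function `Σ_{w ∈ Σ_β^n} sup_{y ∈ I_n(w)} e^{S_n g(y)}`. -/
def presSum (β : ℝ) (g : ℝ → ℝ) (n : ℕ) : ℝ :=
  ∑' w : SigmaB β n, ⨆ y ∈ cyl β (w : List ℤ), Real.exp (birk β g n y)

/-- The pressure function `P(g, T_β)`. -/
def pressure (β : ℝ) (g : ℝ → ℝ) : ℝ :=
  limUnder Filter.atTop fun n : ℕ => Real.log (presSum β g n) / n

end

section auxlemmas
variable {β : ℝ}

lemma bT_mem (β x : ℝ) : bT β x ∈ Set.Ico (0:ℝ) 1 :=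
  ⟨Int.fract_nonneg _, Int.fract_lt_one _⟩

lemma iter_mem (β : ℝ) {x : ℝ} (hx : x ∈ Set.Ico (0:ℝ) 1) (k : ℕ) :
    (bT β)^[k] x ∈ Set.Ico (0:ℝ) 1 := by
  cases k with
  | zero => exact hx
  | succ k => rw [Function.iterate_succ_apply']; exact bT_mem β _

lemma iter_step (β x : ℝ) (k : ℕ) :
    (bT β)^[k+1] x = β * (bT β)^[k] x - dig β x k := by
  rw [Function.iterate_succ_apply']
  show Int.fract (β * (bT β)^[k] x) = _
  rw [Int.fract, dig]

lemma dig_nonneg (hβ : 1 < β) {x : ℝ} (hx : x ∈ Set.Ico (0:ℝ) 1) (k : ℕ) :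
    0 ≤ dig β x k := by
  have h1 := (iter_mem β hx k).1
  have hβ0 : (0:ℝ) < β := one_pos.trans hβ
  exact Int.floor_nonneg.mpr (mul_nonneg hβ0.le h1)

lemma expansion (hβ : 1 < β) (x : ℝ) (n : ℕ) :
    x = (∑ i ∈ Finset.range n, (dig β x i : ℝ) / β ^ (i+1)) + (bT β)^[n] x / β ^ n := by
  have hβ0 : (0:ℝ) < β := one_pos.trans hβ
  induction n with
  | zero => simp
  | succ n ih =>
    rw [Finset.sum_range_succ, iter_step]
    have h1 : β ^ (n+1) ≠ 0 := by positivity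
    have h2 : (β:ℝ) ^ n ≠ 0 := by positivity
    have key : ((dig β x n : ℝ)) / β ^ (n+1) + (β * (bT β)^[n] x - (dig β x n : ℝ)) / β ^ (n+1)
        = (bT β)^[n] x / β ^ n := by
      rw [← add_div]
      have h3 : (dig β x n : ℝ) + (β * (bT β)^[n] x - (dig β x n : ℝ)) = β * (bT β)^[n] x := by
        ring
      rw [h3, pow_succ', mul_div_mul_left _ _ (ne_of_gt hβ0)]
    rw [add_assoc, key]
    exact ih

lemma iter_of_digits (hβ : 1 < β) {x : ℝ} {n : ℕ} {W : ℕ → ℤ}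
    (h : ∀ i < n, dig β x i = W i) :
    (bT β)^[n] x = β ^ n * (x - ∑ i ∈ Finset.range n, (W i : ℝ) / β ^ (i+1)) := by
  have hβ0 : (0:ℝ) < β := one_pos.trans hβ
  have hpn : (0:ℝ) < β ^ n := by positivity
  have he := expansion hβ x n
  have hs : ∑ i ∈ Finset.range n, (dig β x i : ℝ) / β ^ (i+1)
      = ∑ i ∈ Finset.range n, (W i : ℝ) / β ^ (i+1) :=
    Finset.sum_congr rfl (fun i hi => by rw [h i (Finset.mem_range.mp hi)])
  rw [hs] at he
  field_simp at he ⊢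
  linarith

lemma digits_close (hβ : 1 < β) {x y : ℝ} (hx : x ∈ Set.Ico (0:ℝ) 1)
    (hy : y ∈ Set.Ico (0:ℝ) 1) (L : ℕ) (h : ∀ j < L, dig β x j = dig β y j) :
    |x - y| < (β ^ L)⁻¹ := by
  have hβ0 : (0:ℝ) < β := one_pos.trans hβ
  have hpL : (0:ℝ) < β ^ L := by positivity
  have hex := expansion hβ x L
  have hey := expansion hβ y L
  have hs : ∑ i ∈ Finset.range L, (dig β x i : ℝ) / β ^ (i+1)
      = ∑ i ∈ Finset.range L, (dig β y i : ℝ) / β ^ (i+1) :=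
    Finset.sum_congr rfl (fun i hi => by rw [h i (Finset.mem_range.mp hi)])
  have hax := iter_mem β hx L
  have hay := iter_mem β hy L
  have hpinv : (0:ℝ) < (β ^ L)⁻¹ := by positivity
  have main : ∀ a b : ℝ, a ∈ Set.Ico (0:ℝ) 1 → b ∈ Set.Ico (0:ℝ) 1 →
      a / β ^ L - b / β ^ L < (β ^ L)⁻¹ := by
    intro a b ha hb
    have h1 : a / β ^ L < 1 / β ^ L := by gcongr; exact ha.2
    have h2 : (0:ℝ) ≤ b / β ^ L := div_nonneg hb.1 hpL.le
    rw [one_div] at h1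
    linarith
  have hd : x - y = (bT β)^[L] x / β ^ L - (bT β)^[L] y / β ^ L := by
    rw [hs] at hex
    linarith
  rw [abs_sub_lt_iff]
  constructor
  · rw [hd]; exact main _ _ hax hay
  · have hd' : y - x = (bT β)^[L] y / β ^ L - (bT β)^[L] x / β ^ L := by linarith
    rw [hd']; exact main _ _ hay hax

lemma digits_down (hβ : 1 < β) {n : ℕ} {W : ℕ → ℤ} (hW : ∀ i < n, 0 ≤ W i)
    {z y : ℝ} (hdz : ∀ i < n, dig β z i = W i)
    (hy1 : ∑ i ∈ Finset.range n, (W i : ℝ) / β ^ (i+1) ≤ y) (hy2 : y ≤ z) :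
    ∀ i < n, dig β y i = W i := by
  have hβ0 : (0:ℝ) < β := one_pos.trans hβ
  suffices h : ∀ k, k ≤ n → ∀ i < k, dig β y i = W i from fun i hi => h n le_rfl i hi
  intro k
  induction k with
  | zero => intro _ i hi; exact absurd hi (Nat.not_lt_zero i)
  | succ k ih =>
    intro hk i hi
    have hkn : k < n := hk
    have ihk : ∀ j < k, dig β y j = W j := ih (le_of_lt hkn)
    rcases Nat.lt_succ_iff_lt_or_eq.mp hi with h' | rfl
    · exact ihk i h'
    · -- i = k
      have hTy := iter_of_digits hβ ihk (x := y)
      have hTz := iter_of_digits hβ (fun j hj => hdz j (hj.trans hkn)) (x := z)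
      set Sk := ∑ j ∈ Finset.range i, (W j : ℝ) / β ^ (j+1) with hSkdef
      have hpk : (0:ℝ) < β ^ (i+1) := by positivity
      have hpk0 : (0:ℝ) < β ^ i := by positivity
      have hsum_split : Sk + ∑ j ∈ Finset.Ico i n, (W j : ℝ) / β ^ (j+1)
          = ∑ j ∈ Finset.range n, (W j : ℝ) / β ^ (j+1) :=
        Finset.sum_range_add_sum_Ico _ (le_of_lt hkn)
      have hterm : (W i : ℝ) / β ^ (i+1) ≤ ∑ j ∈ Finset.Ico i n, (W j : ℝ) / β ^ (j+1) := by
        apply Finset.single_le_sum (f := fun j => (W j : ℝ) / β ^ (j+1))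
        · intro j hj
          have hjn : j < n := (Finset.mem_Ico.mp hj).2
          have : (0:ℝ) ≤ (W j : ℝ) := by exact_mod_cast hW j hjn
          positivity
        · exact Finset.mem_Ico.mpr ⟨le_rfl, hkn⟩
      have h2 : (W i : ℝ) / β ^ (i+1) ≤ y - Sk := by
        have := hsum_split ▸ hy1
        linarith
      have hlow : (W i : ℝ) ≤ β * (bT β)^[i] y := by
        rw [hTy]
        calc (W i : ℝ) = β ^ (i+1) * ((W i : ℝ) / β ^ (i+1)) := by field_simp
        _ ≤ β ^ (i+1) * (y - Sk) := by
            exact mul_le_mul_of_nonneg_left h2 (le_of_lt hpk)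
        _ = β * (β ^ i * (y - Sk)) := by ring
      have hup : β * (bT β)^[i] y < (W i : ℝ) + 1 := by
        have hdzk : ⌊β * (bT β)^[i] z⌋ = W i := hdz i hkn
        have hz1 : β * (bT β)^[i] z < (W i : ℝ) + 1 := by
          have := Int.lt_floor_add_one (β * (bT β)^[i] z)
          rw [hdzk] at this
          exact_mod_cast this
        have hmono : (bT β)^[i] y ≤ (bT β)^[i] z := by
          rw [hTy, hTz]
          have : y - Sk ≤ z - Sk := by linarith
          exact mul_le_mul_of_nonneg_left this (le_of_lt hpk0)
        nlinarith
      show dig β y i = W i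
      exact Int.floor_eq_iff.mpr ⟨hlow, by push_cast; linarith⟩

end auxlemmas

theorem stmt4 (β : ℝ) (hβ : 1 < β) (w : List ℤ) (hw : Adm β w) :
    IsFull β w ↔ ∀ v : List ℤ, 1 ≤ v.length → Adm β v → Adm β (w ++ v) := by
  classical
  have hβ0 : (0:ℝ) < β := one_pos.trans hβ
  set n := w.length with hn
  have hpn : (0:ℝ) < β ^ n := by positivity
  have hpninv : (0:ℝ) < (β ^ n)⁻¹ := by positivity
  set W : ℕ → ℤ := fun i => w.getD i 0 with hWdef
  have hgetW : ∀ (i : ℕ) (h : i < n), W i = w.get ⟨i, h⟩ := by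
    intro i h
    simp only [hWdef]
    exact List.getD_eq_getElem w 0 h
  have hWnn : ∀ i < n, 0 ≤ W i := by
    obtain ⟨x, hx, hdx⟩ := hw
    intro i hi
    rw [hgetW i hi, ← hdx ⟨i, hi⟩]
    exact dig_nonneg hβ hx i
  set s : ℝ := ∑ i ∈ Finset.range n, (W i : ℝ) / β ^ (i+1) with hsdef
  have hs0 : 0 ≤ s := by
    apply Finset.sum_nonneg
    intro i hi
    have h0 : (0:ℝ) ≤ (W i : ℝ) := by exact_mod_cast hWnn i (Finset.mem_range.mp hi)
    positivity
  have hmem : ∀ x : ℝ, x ∈ cyl β w ↔ (x ∈ Set.Ico (0:ℝ) 1 ∧ ∀ i < n, dig β x i = W i) := by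
    intro x
    simp only [cyl, Set.mem_setOf_eq]
    constructor
    · rintro ⟨h1, h2⟩
      exact ⟨h1, fun i hi => by rw [hgetW i hi]; exact h2 ⟨i, hi⟩⟩
    · rintro ⟨h1, h2⟩
      exact ⟨h1, fun i => by rw [← hgetW i i.2]; exact h2 i i.2⟩
  have hTn : ∀ x ∈ cyl β w, (bT β)^[n] x = β ^ n * (x - s) := by
    intro x hx
    exact iter_of_digits hβ ((hmem x).mp hx).2
  have hsub : ∀ x ∈ cyl β w, s ≤ x ∧ x < s + (β ^ n)⁻¹ := by
    intro x hx
    have h1 := iter_mem β ((hmem x).mp hx).1 n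
    rw [hTn x hx] at h1
    obtain ⟨h2, h3⟩ := h1
    constructor
    · nlinarith
    · nlinarith [mul_inv_cancel₀ (ne_of_gt hpn)]
  have hIco_sub : cyl β w ⊆ Set.Ico s (s + (β ^ n)⁻¹) :=
    fun x hx => ⟨(hsub x hx).1, (hsub x hx).2⟩
  have hdown : ∀ z ∈ cyl β w, ∀ y : ℝ, s ≤ y → y ≤ z → y ∈ cyl β w := by
    intro z hz y hsy hyz
    obtain ⟨hz01, hdz⟩ := (hmem z).mp hz
    have hy01 : y ∈ Set.Ico (0:ℝ) 1 := ⟨le_trans hs0 hsy, lt_of_le_of_lt hyz hz01.2⟩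
    exact (hmem y).mpr ⟨hy01, digits_down hβ hWnn hdz hsy hyz⟩
  have hne : s ∈ cyl β w := by
    obtain ⟨x, hx, hdx⟩ := hw
    have hxc : x ∈ cyl β w := by
      simp only [cyl, Set.mem_setOf_eq]
      exact ⟨hx, hdx⟩
    exact hdown x hxc s le_rfl (hsub x hxc).1
  constructor
  · intro hfull v hv1 hvadm
    have hvol_le : volume (cyl β w) ≤ ENNReal.ofReal ((β ^ n)⁻¹) := by
      calc volume (cyl β w) ≤ volume (Set.Ico s (s + (β ^ n)⁻¹)) := measure_mono hIco_sub
      _ = ENNReal.ofReal ((β ^ n)⁻¹) := by rw [Real.volume_Ico, add_sub_cancel_left]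
    have hvol_ne : volume (cyl β w) ≠ ⊤ :=
      ne_top_of_le_ne_top ENNReal.ofReal_ne_top hvol_le
    have hvol_eq : volume (cyl β w) = ENNReal.ofReal ((β ^ n)⁻¹) := by
      have h0 : cylLen β w = (β ^ n)⁻¹ := hfull
      rw [cylLen] at h0
      rw [← ENNReal.ofReal_toReal hvol_ne, h0]
    have hIoo : Set.Ioo s (s + (β ^ n)⁻¹) ⊆ cyl β w := by
      intro y hy
      by_contra hyc
      have hcs : cyl β w ⊆ Set.Ico s y := by
        intro z hz
        refine ⟨(hsub z hz).1, ?_⟩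
        by_contra hzy
        push_neg at hzy
        exact hyc (hdown z hz y hy.1.le hzy)
      have h1 : volume (cyl β w) ≤ ENNReal.ofReal (y - s) := by
        calc volume (cyl β w) ≤ volume (Set.Ico s y) := measure_mono hcs
        _ = ENNReal.ofReal (y - s) := Real.volume_Ico
      rw [hvol_eq] at h1
      have hy0 : 0 ≤ y - s := by linarith [hy.1]
      have h2 : (β ^ n)⁻¹ ≤ y - s := by
        rwa [ENNReal.ofReal_le_ofReal_iff hy0] at h1
      linarith [hy.2]
    obtain ⟨x₀, hx₀, hdv⟩ := hvadm
    set z : ℝ := s + x₀ * (β ^ n)⁻¹ with hzdef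
    have hz_cyl : z ∈ cyl β w := by
      rcases eq_or_lt_of_le hx₀.1 with h0 | h0
      · have hzs : z = s := by rw [hzdef, ← h0]; ring
        rw [hzs]; exact hne
      · apply hIoo
        constructor
        · rw [hzdef]
          nlinarith [mul_pos h0 hpninv]
        · rw [hzdef]
          nlinarith [hx₀.2, hpninv]
    have hTz : (bT β)^[n] z = x₀ := by
      rw [hTn z hz_cyl, hzdef]
      field_simp
      ring
    refine ⟨z, ((hmem z).mp hz_cyl).1, ?_⟩
    intro i
    have hilen : (i : ℕ) < n + v.length := by
      have h0 := i.2
      simpa using h0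
    rcases lt_or_ge (i : ℕ) n with hlt | hge
    · have h1 : (w ++ v).get i = w.get ⟨(i:ℕ), hlt⟩ := by
        rw [List.get_eq_getElem, List.get_eq_getElem]
        exact List.getElem_append_left hlt
      rw [h1]
      have h2 := ((hmem z).mp hz_cyl).2 (i:ℕ) hlt
      rwa [hgetW (i:ℕ) hlt] at h2
    · have hj : (i : ℕ) - n < v.length := by omega
      have hieq : (i : ℕ) = n + ((i : ℕ) - n) := by omega
      have h1 : (w ++ v).get i = v.get ⟨(i : ℕ) - n, hj⟩ := by
        rw [List.get_eq_getElem, List.get_eq_getElem]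
        exact List.getElem_append_right hge
      have h2 : dig β z ((i:ℕ)) = dig β x₀ ((i : ℕ) - n) := by
        conv_lhs => rw [hieq]
        unfold dig
        rw [Nat.add_comm n ((i : ℕ) - n), Function.iterate_add_apply, hTz]
      rw [h2, h1]
      exact hdv ⟨(i : ℕ) - n, hj⟩
  · intro H
    have hIoo : Set.Ioo s (s + (β ^ n)⁻¹) ⊆ cyl β w := by
      intro u hu
      set y : ℝ := (u + (s + (β ^ n)⁻¹)) / 2 with hydef
      have hy1 : s < y := by rw [hydef]; linarith [hu.1, hu.2]
      have hy2 : y < s + (β ^ n)⁻¹ := by rw [hydef]; linarith [hu.2]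
      have huy : u < y := by rw [hydef]; linarith [hu.2]
      set x₀ : ℝ := β ^ n * (y - s) with hx₀def
      have hx₀mem : x₀ ∈ Set.Ico (0:ℝ) 1 := by
        constructor
        · rw [hx₀def]; nlinarith
        · rw [hx₀def]; nlinarith [mul_inv_cancel₀ (ne_of_gt hpn)]
      obtain ⟨L0, hL0⟩ := pow_unbounded_of_one_lt ((y - u)⁻¹ * (β ^ n)⁻¹) hβ
      set L := L0 + 1 with hLdef
      have hpL : (0:ℝ) < β ^ L := by positivity
      have hpLinv : (0:ℝ) < (β ^ L)⁻¹ := by positivity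
      have hyu : (0:ℝ) < y - u := by linarith
      have hLbig : (β ^ n)⁻¹ * (β ^ L)⁻¹ < y - u := by
        have h1 : β ^ L0 ≤ β ^ L := pow_le_pow_right₀ (le_of_lt hβ) (by omega)
        have h2 : (y - u)⁻¹ * (β ^ n)⁻¹ < β ^ L := lt_of_lt_of_le hL0 h1
        have e1 : (y - u) * (y - u)⁻¹ = 1 := mul_inv_cancel₀ (ne_of_gt hyu)
        have e3 : β ^ L * (β ^ L)⁻¹ = 1 := mul_inv_cancel₀ (ne_of_gt hpL)
        have s1 : (β ^ n)⁻¹ < (y - u) * β ^ L := by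
          have h3 := mul_lt_mul_of_pos_left h2 hyu
          calc (β ^ n)⁻¹ = (y - u) * ((y - u)⁻¹ * (β ^ n)⁻¹) := by
                rw [← mul_assoc, e1, one_mul]
          _ < (y - u) * β ^ L := h3
        calc (β ^ n)⁻¹ * (β ^ L)⁻¹ < ((y - u) * β ^ L) * (β ^ L)⁻¹ :=
              mul_lt_mul_of_pos_right s1 hpLinv
        _ = y - u := by rw [mul_assoc, e3, mul_one]
      set v : List ℤ := List.ofFn (fun j : Fin L => dig β x₀ (j : ℕ)) with hvdef
      have hvlen : v.length = L := by rw [hvdef]; exact List.length_ofFn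
      have hvget : ∀ (j : ℕ) (hj : j < v.length), v.get ⟨j, hj⟩ = dig β x₀ j := by
        intro j hj
        have hj3 : j < L := by omega
        have hj2 : j < (List.ofFn (fun j : Fin L => dig β x₀ (j : ℕ))).length := by
          rw [List.length_ofFn]; exact hj3
        exact List.getElem_ofFn hj2
      have hvadm : Adm β v := by
        refine ⟨x₀, hx₀mem, ?_⟩
        intro i
        rw [hvget (i : ℕ) i.2]
      obtain ⟨z, hz01, hdz⟩ := H v (by omega) hvadm
      have hz_cyl : z ∈ cyl β w := by
        simp only [cyl, Set.mem_setOf_eq]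
        refine ⟨hz01, ?_⟩
        intro i
        have hi2 : (i : ℕ) < (w ++ v).length := by simp; omega
        have h1 := hdz ⟨(i : ℕ), hi2⟩
        rw [h1, List.get_eq_getElem, List.get_eq_getElem]
        exact List.getElem_append_left i.2
      have hTz := hTn z hz_cyl
      have hdig : ∀ j < L, dig β ((bT β)^[n] z) j = dig β x₀ j := by
        intro j hj
        have hj2 : n + j < (w ++ v).length := by simp [hvlen]; omega
        have h1 := hdz ⟨n + j, hj2⟩
        have h4 : dig β z (n + j) = dig β ((bT β)^[n] z) j := by
          unfold dig
          rw [Nat.add_comm n j, Function.iterate_add_apply]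
        rw [← h4, h1, List.get_eq_getElem]
        have h5 : (w ++ v)[(n + j : ℕ)]'hj2 = v[(n + j) - w.length]'(by simp [hvlen]; omega) :=
          List.getElem_append_right (by omega)
        rw [h5]
        have h6 : (n + j) - w.length = j := by omega
        simp only [h6]
        have h7 := hvget j (by omega)
        rw [List.get_eq_getElem] at h7
        exact h7
      have hclose := digits_close hβ (iter_mem β hz01 n) hx₀mem L hdig
      have hzu : u < z := by
        rw [abs_sub_lt_iff] at hclose
        have h5 := hclose.2
        rw [hTz] at h5
        have h6 : β ^ n * (y - z) < (β ^ L)⁻¹ := by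
          rw [hx₀def] at h5
          nlinarith [h5]
        have h7 : y - z < (β ^ n)⁻¹ * (β ^ L)⁻¹ := by
          have h8 := mul_lt_mul_of_pos_left h6 hpninv
          calc y - z = (β ^ n)⁻¹ * (β ^ n * (y - z)) := by
                rw [← mul_assoc, inv_mul_cancel₀ (ne_of_gt hpn), one_mul]
          _ < (β ^ n)⁻¹ * (β ^ L)⁻¹ := h8
        linarith
      exact hdown z hz_cyl u hu.1.le hzu.le
    have h1 : ENNReal.ofReal ((β ^ n)⁻¹) ≤ volume (cyl β w) := by
      have h0 := measure_mono (μ := volume) hIoo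
      rwa [Real.volume_Ioo, add_sub_cancel_left] at h0
    have h2 : volume (cyl β w) ≤ ENNReal.ofReal ((β ^ n)⁻¹) := by
      have h0 := measure_mono (μ := volume) hIco_sub
      rwa [Real.volume_Ico, add_sub_cancel_left] at h0
    have h3 : volume (cyl β w) = ENNReal.ofReal ((β ^ n)⁻¹) := le_antisymm h2 h1
    show cylLen β w = (β ^ n)⁻¹
    rw [cylLen, h3, ENNReal.toReal_ofReal (le_of_lt hpninv)]
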